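/- arXiv:2405.18972 — 2 statements merged into one kernel-verified Lean document; each statement's English description precedes it below -/
import Mathlib

section
/- Let m_1, …, m_C ∈ ℝ^d (C ≥ 2) form a simplex equiangular tight frame, let E_W, E_H > 0, and fix a class c ∈ {1,…,C}. Then over the closed ball {h ∈ ℝ^d : ‖h‖² ≤ E_H}, the function h ↦ −log( exp(√E_W·⟨m_c, h⟩) / Σ_{j=1}^C exp(√E_W·⟨m_j, h⟩) ) attains its minimum at h = √E_H · m_c. -/
open scoped RealInnerProductSpace

/-- **Fixed-ETF per-sample optimality.** If `m_1, …, m_C` form a simplex ETF, then over the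
ball `‖h‖² ≤ E_H` the cross-entropy of class `c` against the scaled-ETF classifier `√E_W·M`
attains its minimum at `h = √E_H · m_c`. -/
theorem fixed_ETF_feature_minimizer
    (C d : ℕ) (hC : 2 ≤ C)
    (m : Fin C → EuclideanSpace ℝ (Fin d))
    (hunit : ∀ i : Fin C, ‖m i‖ = 1)
    (hangle : ∀ i j : Fin C, i ≠ j → ⟪m i, m j⟫ = -1 / ((C : ℝ) - 1))
    (hsum : ∑ i : Fin C, m i = 0)
    (E_W E_H : ℝ) (hEW : 0 < E_W) (hEH : 0 < E_H)
    (c : Fin C) :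
    ‖Real.sqrt E_H • m c‖ ^ 2 ≤ E_H ∧
    ∀ h : EuclideanSpace ℝ (Fin d), ‖h‖ ^ 2 ≤ E_H →
      -Real.log (Real.exp (Real.sqrt E_W * ⟪m c, Real.sqrt E_H • m c⟫) /
          ∑ j : Fin C, Real.exp (Real.sqrt E_W * ⟪m j, Real.sqrt E_H • m c⟫)) ≤
      -Real.log (Real.exp (Real.sqrt E_W * ⟪m c, h⟫) /
          ∑ j : Fin C, Real.exp (Real.sqrt E_W * ⟪m j, h⟫)) := by
  have hC2 : (2:ℝ) ≤ (C:ℝ) := by exact_mod_cast hC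
  have hC1pos : (0:ℝ) < (C:ℝ) - 1 := by linarith
  have hEHs : Real.sqrt E_H ^ 2 = E_H := Real.sq_sqrt hEH.le
  have hWnn : 0 ≤ Real.sqrt E_W := Real.sqrt_nonneg _
  have hHnn : 0 ≤ Real.sqrt E_H := Real.sqrt_nonneg _
  set t := Real.sqrt E_W with ht
  refine ⟨?_, ?_⟩
  · rw [norm_smul, Real.norm_eq_abs, abs_of_nonneg hHnn, hunit, mul_one]
    exact le_of_eq hEHs
  intro h hh
  have hNe : (Finset.univ : Finset (Fin C)).Nonempty := ⟨c, Finset.mem_univ c⟩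
  have hS : ∀ x : EuclideanSpace ℝ (Fin d),
      (0:ℝ) < ∑ j : Fin C, Real.exp (t * ⟪m j, x⟫) :=
    fun x => Finset.sum_pos (fun j _ => Real.exp_pos _) hNe
  have hrw : ∀ x : EuclideanSpace ℝ (Fin d),
      -Real.log (Real.exp (t * ⟪m c, x⟫) / ∑ j : Fin C, Real.exp (t * ⟪m j, x⟫))
        = Real.log (∑ j : Fin C, Real.exp (t * ⟪m j, x⟫ - t * ⟪m c, x⟫)) := by
    intro x
    have hsd : (∑ j : Fin C, Real.exp (t * ⟪m j, x⟫ - t * ⟪m c, x⟫))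
        = (∑ j : Fin C, Real.exp (t * ⟪m j, x⟫)) / Real.exp (t * ⟪m c, x⟫) := by
      rw [Finset.sum_div]
      exact Finset.sum_congr rfl fun j _ => Real.exp_sub _ _
    rw [Real.log_div (Real.exp_pos _).ne' (hS x).ne', Real.log_exp, hsd,
      Real.log_div (hS x).ne' (Real.exp_pos _).ne', Real.log_exp]
    ring
  rw [hrw, hrw]
  have hcard : ((Finset.univ.erase c).card : ℝ) = (C:ℝ) - 1 := by
    rw [Finset.card_erase_of_mem (Finset.mem_univ c)]
    simp
    push_cast [Nat.cast_sub (by omega : 1 ≤ C)]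
    ring
  have hmerase : ∑ j ∈ Finset.univ.erase c, m j = -m c := by
    have h0 := Finset.add_sum_erase Finset.univ m (Finset.mem_univ c)
    rw [hsum] at h0
    exact eq_neg_of_add_eq_zero_right h0
  -- the constant exponent at the optimum
  set K : ℝ := -(t * Real.sqrt E_H * (C:ℝ) / ((C:ℝ) - 1)) with hK
  have hLHS : (∑ j : Fin C, Real.exp (t * ⟪m j, Real.sqrt E_H • m c⟫
        - t * ⟪m c, Real.sqrt E_H • m c⟫))
      = 1 + ((C:ℝ) - 1) * Real.exp K := by
    rw [← Finset.add_sum_erase Finset.univ _ (Finset.mem_univ c)]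
    have h1 : Real.exp (t * ⟪m c, Real.sqrt E_H • m c⟫
        - t * ⟪m c, Real.sqrt E_H • m c⟫) = 1 := by
      rw [sub_self, Real.exp_zero]
    rw [h1]
    congr 1
    have hterm : ∀ j ∈ Finset.univ.erase c,
        Real.exp (t * ⟪m j, Real.sqrt E_H • m c⟫ - t * ⟪m c, Real.sqrt E_H • m c⟫)
          = Real.exp K := by
      intro j hj
      have hjc : j ≠ c := Finset.ne_of_mem_erase hj
      have hcc : ⟪m c, m c⟫ = (1:ℝ) := by
        rw [real_inner_self_eq_norm_sq, hunit c, one_pow]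
      rw [real_inner_smul_right, real_inner_smul_right, hangle j c hjc, hcc]
      congr 1
      rw [hK]
      field_simp [hK]
      ring
    rw [Finset.sum_congr rfl hterm, Finset.sum_const, nsmul_eq_mul, hcard]
  rw [hLHS]
  -- lower bound the general sum
  apply Real.log_le_log (by positivity)
  rw [← Finset.add_sum_erase Finset.univ _ (Finset.mem_univ c), sub_self, Real.exp_zero]
  gcongr
  -- Jensen
  have hw : ∑ _j ∈ Finset.univ.erase c, ((C:ℝ) - 1)⁻¹ = 1 := by
    rw [Finset.sum_const, nsmul_eq_mul, hcard, mul_inv_cancel₀ hC1pos.ne']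
  have hJ := convexOn_exp.map_sum_le (t := Finset.univ.erase c)
      (w := fun _ => ((C:ℝ) - 1)⁻¹)
      (p := fun j => t * ⟪m j, h⟫ - t * ⟪m c, h⟫)
      (fun _ _ => by positivity) hw (fun _ _ => Set.mem_univ _)
  simp only [smul_eq_mul] at hJ
  have hsumexp : ∑ j ∈ Finset.univ.erase c,
      (((C:ℝ) - 1)⁻¹ * (t * ⟪m j, h⟫ - t * ⟪m c, h⟫))
      = ((C:ℝ) - 1)⁻¹ * (-(C:ℝ) * (t * ⟪m c, h⟫)) := by
    rw [← Finset.mul_sum, Finset.sum_sub_distrib, ← Finset.mul_sum, ← Finset.mul_sum,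
      ← sum_inner, hmerase, Finset.sum_const, nsmul_eq_mul, hcard, inner_neg_left]
    ring
  rw [hsumexp] at hJ
  have hmch : ⟪m c, h⟫ ≤ Real.sqrt E_H := by
    have h1 := real_inner_le_norm (m c) h
    have h2 : ‖h‖ ≤ Real.sqrt E_H := by
      have := Real.sqrt_le_sqrt hh
      rwa [Real.sqrt_sq (norm_nonneg h)] at this
    calc ⟪m c, h⟫ ≤ ‖m c‖ * ‖h‖ := h1
      _ = ‖h‖ := by rw [hunit, one_mul]
      _ ≤ Real.sqrt E_H := h2
  calc ((C:ℝ) - 1) * Real.exp K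
      ≤ ((C:ℝ) - 1) * Real.exp (((C:ℝ) - 1)⁻¹ * (-(C:ℝ) * (t * ⟪m c, h⟫))) := by
        gcongr
        rw [hK]
        rw [div_eq_inv_mul]
        have hCpos : (0:ℝ) < (C:ℝ) := by linarith
        have : ((C:ℝ) - 1)⁻¹ * ((C:ℝ) * t) * ⟪m c, h⟫
            ≤ ((C:ℝ) - 1)⁻¹ * ((C:ℝ) * t) * Real.sqrt E_H := by
          gcongr
        nlinarith [this]
      _ ≤ ((C:ℝ) - 1) * ∑ j ∈ Finset.univ.erase c,
            (((C:ℝ) - 1)⁻¹ * Real.exp (t * ⟪m j, h⟫ - t * ⟪m c, h⟫)) := by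
        gcongr
      _ = ∑ j ∈ Finset.univ.erase c, Real.exp (t * ⟪m j, h⟫ - t * ⟪m c, h⟫) := by
        rw [← Finset.mul_sum, ← mul_assoc, mul_inv_cancel₀ hC1pos.ne', one_mul]
end

section
/- Let F, f : ℝ^d → ℝ be differentiable, suppose ∇f is L-Lipschitz (‖∇f(u) − ∇f(v)‖ ≤ L‖u − v‖ for all u, v), and suppose F satisfies the quadratic growth condition F(w) − F(w*) ≥ (μ/2)‖w − w*‖² for all w ∈ ℝ^d at some point w* (μ > 0). Then with κ = L/μ, for every w ∈ ℝ^d: ‖∇f(w)‖² ≤ 4Lκ·(F(w) − F(w*)) + 2‖∇f(w*)‖². -/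
open scoped RealInnerProductSpace

/-- **Corrected bound on the (stochastic) gradient norm.** If `∇f` is L-Lipschitz and `F`
satisfies quadratic growth `F(w) − F(w*) ≥ (μ/2)‖w − w*‖²` with `μ > 0`, then with
`κ = L/μ`, `‖∇f(w)‖² ≤ 4Lκ(F(w) − F(w*)) + 2‖∇f(w*)‖²` for every `w`. -/
theorem corrected_gradient_norm_bound
    (d : ℕ) (F f : EuclideanSpace ℝ (Fin d) → ℝ)
    (hFdiff : Differentiable ℝ F) (hfdiff : Differentiable ℝ f)
    (L : ℝ)
    (hlip : ∀ u v : EuclideanSpace ℝ (Fin d),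
      ‖gradient f u - gradient f v‖ ≤ L * ‖u - v‖)
    (μ : ℝ) (hμ : 0 < μ)
    (wstar : EuclideanSpace ℝ (Fin d))
    (hqg : ∀ w : EuclideanSpace ℝ (Fin d),
      F w - F wstar ≥ (μ / 2) * ‖w - wstar‖ ^ 2)
    (κ : ℝ) (hκ : κ = L / μ) :
    ∀ w : EuclideanSpace ℝ (Fin d),
      ‖gradient f w‖ ^ 2 ≤ 4 * L * κ * (F w - F wstar) + 2 * ‖gradient f wstar‖ ^ 2 := by
  intro w
  have hqgw := hqg w
  have ha : ‖gradient f w‖ ≤ L * ‖w - wstar‖ + ‖gradient f wstar‖ := by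
    have h := norm_add_le (gradient f w - gradient f wstar) (gradient f wstar)
    simp only [sub_add_cancel] at h
    linarith [hlip w wstar]
  have h1 : (0:ℝ) ≤ ‖gradient f w‖ := norm_nonneg _
  have key : ‖gradient f w‖ ^ 2 ≤ 2 * L ^ 2 * ‖w - wstar‖ ^ 2 + 2 * ‖gradient f wstar‖ ^ 2 := by
    nlinarith [sq_nonneg (L * ‖w - wstar‖ - ‖gradient f wstar‖), mul_self_le_mul_self h1 ha]
  have h5 : L ^ 2 * (μ / 2 * ‖w - wstar‖ ^ 2) ≤ L ^ 2 * (F w - F wstar) :=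
    mul_le_mul_of_nonneg_left hqgw (sq_nonneg L)
  have hκ' : κ * μ = L := by rw [hκ]; exact div_mul_cancel₀ L hμ.ne'
  have h6 : 2 * L ^ 2 * ‖w - wstar‖ ^ 2 ≤ 4 * L * κ * (F w - F wstar) := by
    have he : 4 * L * κ * (F w - F wstar) = (4 / μ) * (L ^ 2 * (F w - F wstar)) := by
      rw [hκ]; field_simp
    rw [he]
    have hp : (0:ℝ) ≤ 4 / μ := by positivity
    calc 2 * L ^ 2 * ‖w - wstar‖ ^ 2 = (4 / μ) * (L ^ 2 * (μ / 2 * ‖w - wstar‖ ^ 2)) := by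
          field_simp; ring
      _ ≤ (4 / μ) * (L ^ 2 * (F w - F wstar)) := mul_le_mul_of_nonneg_left h5 hp
  linarith
end
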